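/- Let A, B and C be lists of natural numbers, each sorted in nondecreasing order. Then merge(merge(diff(A), diff(B)), diff(C)) = merge(diff(A), merge(diff(B), diff(C))): the spike-merge operation is associative on differential encodings of sorted spike trains, so any tree structure of binary spike-merger elements produces the same merged differential spike train. -/

import Mathlib

/-- Differential encoding with respect to a previous time. -/
def diffAux : ℕ → List ℕ → List ℕ
  | _, [] => []
  | prev, a :: as => (a - prev) :: diffAux a as

/-- Differential encoding: `diff [a₁, …, aₙ] = [a₁ - 0, a₂ - a₁, …, aₙ - aₙ₋₁]`. -/
def diff (A : List ℕ) : List ℕ := diffAux 0 A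

/-- The spike-merge operation on differential-time encoded spike trains. -/
def smerge : List ℕ → List ℕ → List ℕ
  | [], ys => ys
  | xs, [] => xs
  | x :: xs, y :: ys =>
    if x ≤ y then x :: smerge xs ((y - x) :: ys)
    else y :: smerge ((x - y) :: xs) ys
termination_by xs ys => xs.length + ys.length
decreasing_by all_goals simp

def mrg : List ℕ → List ℕ → List ℕ
  | [], ys => ys
  | xs, [] => xs
  | x :: xs, y :: ys =>
    if x ≤ y then x :: mrg xs (y :: ys)
    else y :: mrg (x :: xs) ys
termination_by xs ys => xs.length + ys.length
decreasing_by all_goals simp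

lemma mrg_nil (xs : List ℕ) : mrg xs [] = xs := by cases xs <;> simp [mrg]

lemma smerge_nil (xs : List ℕ) : smerge xs [] = xs := by cases xs <;> simp [smerge]

lemma mrg_assoc (A B C : List ℕ) : mrg (mrg A B) C = mrg A (mrg B C) := by
  induction A generalizing B C with
  | nil => simp [mrg]
  | cons a as ihA =>
    induction B generalizing C with
    | nil => simp [mrg, mrg_nil]
    | cons b bs ihB =>
      induction C with
      | nil => simp [mrg_nil]
      | cons c cs ihC =>
        by_cases hab : a ≤ b <;> by_cases hbc : b ≤ c <;>
          by_cases hac : a ≤ c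
        · simp [mrg, hab, hbc, hac, ihA]
        · omega
        · simp [mrg, hab, hbc, hac, ihA]
        · have h1 : mrg (a :: as) (b :: bs) = a :: mrg as (b :: bs) := by
            simp [mrg, hab]
          have h2 : mrg (b :: bs) (c :: cs) = c :: mrg (b :: bs) cs := by
            simp [mrg, hbc]
          rw [h1, h2]
          simp only [mrg]
          rw [if_neg hac, if_neg hac, ← h1, ihC]
        · simp [mrg, hab, hbc, hac, ihB, ihA]
        · simp [mrg, hab, hbc, hac, ihB]
        · omega
        · have h1 : mrg (a :: as) (b :: bs) = b :: mrg (a :: as) bs := by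
            simp [mrg, hab]
          have h2 : mrg (b :: bs) (c :: cs) = c :: mrg (b :: bs) cs := by
            simp [mrg, hbc]
          rw [h1, h2]
          simp only [mrg]
          rw [if_neg hbc, if_neg hac, ← h1, ihC]

lemma mem_mrg {x : ℕ} {A B : List ℕ} : x ∈ mrg A B ↔ x ∈ A ∨ x ∈ B := by
  induction A generalizing B with
  | nil => simp [mrg]
  | cons a as ihA =>
    induction B with
    | nil => simp [mrg_nil]
    | cons b bs ihB =>
      by_cases h : a ≤ b
      · simp [mrg, h, ihA]; tauto
      · simp [mrg, h, ihA] at ihB ⊢; tauto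

lemma sorted_mrg {A B : List ℕ} (hA : A.Pairwise (· ≤ ·)) (hB : B.Pairwise (· ≤ ·)) :
    (mrg A B).Pairwise (· ≤ ·) := by
  induction A generalizing B with
  | nil => simpa [mrg] using hB
  | cons a as ihA =>
    induction B with
    | nil => simpa [mrg_nil] using hA
    | cons b bs ihB =>
      simp only [List.pairwise_cons] at hA hB
      by_cases h : a ≤ b <;> simp only [mrg, h, if_true, if_false, List.pairwise_cons]
      · refine ⟨?_, ihA hA.2 (List.pairwise_cons.mpr hB)⟩
        intro x hx
        rcases mem_mrg.mp hx with h1 | h1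
        · exact hA.1 x h1
        · rcases List.mem_cons.mp h1 with rfl | h2
          · exact h
          · exact le_trans h (hB.1 x h2)
      · refine ⟨?_, ihB hB.2⟩
        intro x hx
        rcases mem_mrg.mp hx with h1 | h1
        · rcases List.mem_cons.mp h1 with rfl | h2
          · omega
          · exact le_trans (by omega) (hA.1 x h2)
        · exact hB.1 x h1

lemma smerge_diffAux (p : ℕ) (A B : List ℕ)
    (hA : A.Pairwise (· ≤ ·)) (hB : B.Pairwise (· ≤ ·))
    (hpA : ∀ x ∈ A, p ≤ x) (hpB : ∀ x ∈ B, p ≤ x) :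
    smerge (diffAux p A) (diffAux p B) = diffAux p (mrg A B) := by
  induction A generalizing p B with
  | nil => simp [diffAux, mrg, smerge]
  | cons a as ihA =>
    induction B generalizing p with
    | nil => simp [diffAux, mrg_nil, smerge_nil]
    | cons b bs ihB =>
      simp only [List.pairwise_cons] at hA hB
      have hpa := hpA a (by simp)
      have hpb := hpB b (by simp)
      by_cases h : a ≤ b
      · have h' : a - p ≤ b - p := by omega
        rw [diffAux, diffAux, smerge, if_pos h', mrg, if_pos h, diffAux]
        congr 1
        · have : b - p - (a - p) = b - a := by omega
          rw [this]
          have : (b - a) :: diffAux b bs = diffAux a (b :: bs) := rfl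
          rw [this]
          exact ihA a (b :: bs) hA.2 (List.pairwise_cons.mpr hB)
            (fun x hx => hA.1 x hx) (by
              intro x hx
              rcases List.mem_cons.mp hx with rfl | h2
              · exact h
              · exact le_trans h (hB.1 x h2))
      · have h' : ¬ (a - p ≤ b - p) := by omega
        rw [diffAux, diffAux, smerge, if_neg h', mrg, if_neg h, diffAux]
        congr 1
        have : a - p - (b - p) = a - b := by omega
        rw [this]
        have : (a - b) :: diffAux a as = diffAux b (a :: as) := rfl
        rw [this]
        exact ihB b hB.2 (by
            intro x hx
            rcases List.mem_cons.mp hx with rfl | h2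
            · omega
            · exact le_trans (by omega) (hA.1 x h2))
          (fun x hx => hB.1 x hx)

/-- The spike-merge operation is associative on differential encodings
of sorted spike trains. -/
theorem smerge_diff_assoc
    (A B C : List ℕ) (hA : A.Pairwise (· ≤ ·)) (hB : B.Pairwise (· ≤ ·))
    (hC : C.Pairwise (· ≤ ·)) :
    smerge (smerge (diff A) (diff B)) (diff C)
      = smerge (diff A) (smerge (diff B) (diff C)) := by
  have h0 : ∀ (L : List ℕ), ∀ x ∈ L, 0 ≤ x := by intro L x _; omega
  unfold diff
  rw [smerge_diffAux 0 A B hA hB (h0 A) (h0 B),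
      smerge_diffAux 0 B C hB hC (h0 B) (h0 C),
      smerge_diffAux 0 (mrg A B) C (sorted_mrg hA hB) hC (h0 _) (h0 C),
      smerge_diffAux 0 A (mrg B C) hA (sorted_mrg hB hC) (h0 A) (h0 _),
      mrg_assoc]
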